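/- The function ξ(t) = ψ(t)/(1+t) is strictly increasing and concave on [0,1], with ξ(0) = 0 and ξ(1) = log 2 (so ξ maps [0,1] onto [0, log 2]), where ψ(t) = (1/2)(1−√t)² log((1−√t)²) + (1/2)(1+√t)² log((1+√t)²) − (1+t) log(1+t). -/

import Mathlib

/-- `ψ(t) = (1/2)(1−√t)² log((1−√t)²) + (1/2)(1+√t)² log((1+√t)²) − (1+t) log(1+t)`
(note `Real.log 0 = 0`). -/
noncomputable def psi (t : ℝ) : ℝ :=
  (1 / 2) * (1 - Real.sqrt t) ^ 2 * Real.log ((1 - Real.sqrt t) ^ 2) +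
    (1 / 2) * (1 + Real.sqrt t) ^ 2 * Real.log ((1 + Real.sqrt t) ^ 2) -
    (1 + t) * Real.log (1 + t)

/-- `ξ(t) = ψ(t)/(1+t)`. -/
noncomputable def xi (t : ℝ) : ℝ := psi t / (1 + t)

lemma psi_eq (t : ℝ) : psi t =
    (1 - Real.sqrt t) ^ 2 * Real.log (1 - Real.sqrt t) +
      (1 + Real.sqrt t) ^ 2 * Real.log (1 + Real.sqrt t) - (1 + t) * Real.log (1 + t) := by
  unfold psi
  rw [Real.log_pow, Real.log_pow]
  push_cast
  ring

/-- first derivative of `xi` -/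
noncomputable def xi' (t : ℝ) : ℝ :=
  (1 - t) / (Real.sqrt t * (1 + t) ^ 2) *
    (Real.log (1 + Real.sqrt t) - Real.log (1 - Real.sqrt t))

/-- second derivative of `xi` -/
noncomputable def xi'' (t : ℝ) : ℝ :=
  (2 * Real.sqrt t * (1 + t) -
      (Real.log (1 + Real.sqrt t) - Real.log (1 - Real.sqrt t)) * (1 + 6 * t - 3 * t ^ 2)) /
    (2 * Real.sqrt t ^ 3 * (1 + t) ^ 3)

lemma hasDerivAt_xi {t : ℝ} (h0 : 0 < t) (h1 : t < 1) : HasDerivAt xi (xi' t) t := by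
  have hs0 : 0 < Real.sqrt t := Real.sqrt_pos.2 h0
  have hs1 : Real.sqrt t < 1 := by
    rw [show (1 : ℝ) = Real.sqrt 1 by simp]
    exact Real.sqrt_lt_sqrt h0.le h1
  have ht0 : (0:ℝ) < 1 + t := by linarith
  have hsq : HasDerivAt Real.sqrt (1 / (2 * Real.sqrt t)) t := Real.hasDerivAt_sqrt h0.ne'
  have hu : HasDerivAt (fun x => 1 - Real.sqrt x) (-(1 / (2 * Real.sqrt t))) t := by
    simpa using (hasDerivAt_const t (1:ℝ)).fun_sub hsq
  have hv : HasDerivAt (fun x => 1 + Real.sqrt x) (1 / (2 * Real.sqrt t)) t := by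
    simpa using (hasDerivAt_const t (1:ℝ)).fun_add hsq
  have hu2 := hu.fun_pow 2
  have hv2 := hv.fun_pow 2
  have hlu : HasDerivAt (fun x => Real.log (1 - Real.sqrt x))
      (-(1 / (2 * Real.sqrt t)) / (1 - Real.sqrt t)) t := hu.log (by linarith)
  have hlv : HasDerivAt (fun x => Real.log (1 + Real.sqrt x))
      ((1 / (2 * Real.sqrt t)) / (1 + Real.sqrt t)) t := hv.log (by linarith)
  have hA := hu2.fun_mul hlu
  have hB := hv2.fun_mul hlv
  have hid : HasDerivAt (fun x : ℝ => 1 + x) 1 t := by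
    simpa using (hasDerivAt_const t (1:ℝ)).fun_add (hasDerivAt_id t)
  have hC := hid.fun_mul (hid.log ht0.ne')
  have hpsi := ((hA.fun_add hB).fun_sub hC).congr_of_eventuallyEq
    (Filter.Eventually.of_forall fun x => (psi_eq x))
  have hxi := hpsi.fun_div hid ht0.ne'
  have : HasDerivAt xi _ t := hxi
  convert this using 1
  rw [psi_eq t]
  have hst : Real.sqrt t ^ 2 = t := Real.sq_sqrt h0.le
  set s := Real.sqrt t with hs
  unfold xi'
  rw [← hst]
  simp only [Real.sqrt_sq hs0.le]
  have h1s : (1:ℝ) - s ≠ 0 := by nlinarith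
  have h2s : (1:ℝ) + s ≠ 0 := by nlinarith
  have h3s : (1:ℝ) + s ^ 2 ≠ 0 := by nlinarith
  field_simp
  ring

lemma hasDerivAt_xi' {t : ℝ} (h0 : 0 < t) (h1 : t < 1) : HasDerivAt xi' (xi'' t) t := by
  have hs0 : 0 < Real.sqrt t := Real.sqrt_pos.2 h0
  have hs1 : Real.sqrt t < 1 := by
    rw [show (1 : ℝ) = Real.sqrt 1 by simp]
    exact Real.sqrt_lt_sqrt h0.le h1
  have ht0 : (0:ℝ) < 1 + t := by linarith
  have hsq : HasDerivAt Real.sqrt (1 / (2 * Real.sqrt t)) t := Real.hasDerivAt_sqrt h0.ne'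
  have hu : HasDerivAt (fun x => 1 - Real.sqrt x) (-(1 / (2 * Real.sqrt t))) t := by
    simpa using (hasDerivAt_const t (1:ℝ)).fun_sub hsq
  have hv : HasDerivAt (fun x => 1 + Real.sqrt x) (1 / (2 * Real.sqrt t)) t := by
    simpa using (hasDerivAt_const t (1:ℝ)).fun_add hsq
  have hlu : HasDerivAt (fun x => Real.log (1 - Real.sqrt x))
      (-(1 / (2 * Real.sqrt t)) / (1 - Real.sqrt t)) t := hu.log (by linarith)
  have hlv : HasDerivAt (fun x => Real.log (1 + Real.sqrt x))
      ((1 / (2 * Real.sqrt t)) / (1 + Real.sqrt t)) t := hv.log (by linarith)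
  have hL := hlv.fun_sub hlu
  have hnum : HasDerivAt (fun x : ℝ => 1 - x) (-1) t := by
    simpa using (hasDerivAt_const t (1:ℝ)).fun_sub (hasDerivAt_id t)
  have hid : HasDerivAt (fun x : ℝ => 1 + x) 1 t := by
    simpa using (hasDerivAt_const t (1:ℝ)).fun_add (hasDerivAt_id t)
  have hden := hsq.fun_mul (hid.fun_pow 2)
  have hq := hnum.fun_div hden (by positivity)
  have hfull := hq.fun_mul hL
  have : HasDerivAt xi' _ t := hfull
  convert this using 1
  have hst : Real.sqrt t ^ 2 = t := Real.sq_sqrt h0.le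
  set s := Real.sqrt t with hs
  unfold xi''
  rw [← hst]
  simp only [Real.sqrt_sq hs0.le]
  have h1s : (1:ℝ) - s ≠ 0 := by nlinarith
  have h2s : (1:ℝ) + s ≠ 0 := by nlinarith
  have h3s : (1:ℝ) + s ^ 2 ≠ 0 := by nlinarith
  field_simp
  ring

lemma key_ineq {s : ℝ} (h0 : 0 < s) (h1 : s < 1) :
    2 * s * (1 + s ^ 2) ≤
      (Real.log (1 + s) - Real.log (1 - s)) * (1 + 6 * s ^ 2 - 3 * s ^ 4) := by
  set f : ℝ → ℝ := fun x =>
    (Real.log (1 + x) - Real.log (1 - x)) * (1 + 6 * x ^ 2 - 3 * x ^ 4) - 2 * x * (1 + x ^ 2)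
    with hf
  have hderiv : ∀ x ∈ Set.Icc (0:ℝ) s, HasDerivAt f
      ((1 / (1 + x) - (-1) / (1 - x)) * (1 + 6 * x ^ 2 - 3 * x ^ 4)
        + (Real.log (1 + x) - Real.log (1 - x)) * (6 * (2 * x) - 3 * (4 * x ^ 3))
        - (2 * (1 + x ^ 2) + 2 * x * (2 * x))) x := by
    intro x hx
    have hx1 : (0:ℝ) < 1 + x := by have := hx.1; linarith
    have hx2 : (0:ℝ) < 1 - x := by have := hx.2; linarith
    have hid : HasDerivAt (fun y : ℝ => 1 + y) 1 x := by
      simpa using (hasDerivAt_const x (1:ℝ)).fun_add (hasDerivAt_id x)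
    have hnm : HasDerivAt (fun y : ℝ => 1 - y) (-1) x := by
      simpa using (hasDerivAt_const x (1:ℝ)).fun_sub (hasDerivAt_id x)
    have hL : HasDerivAt (fun y => Real.log (1 + y) - Real.log (1 - y))
        (1 / (1 + x) - (-1) / (1 - x)) x := by
      have l1 := hid.log hx1.ne'
      have l2 := hnm.log hx2.ne'
      simpa using l1.fun_sub l2
    have hM : HasDerivAt (fun y : ℝ => 1 + 6 * y ^ 2 - 3 * y ^ 4)
        (6 * (2 * x) - 3 * (4 * x ^ 3)) x := by
      have p2 : HasDerivAt (fun y : ℝ => y ^ 2) (2 * x) x := by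
        simpa using hasDerivAt_pow 2 x
      have p4 : HasDerivAt (fun y : ℝ => y ^ 4) (4 * x ^ 3) x := by
        simpa using hasDerivAt_pow 4 x
      simpa using ((p2.const_mul 6).const_add 1).fun_sub (p4.const_mul 3)
    have hR : HasDerivAt (fun y : ℝ => 2 * y * (1 + y ^ 2))
        (2 * (1 + x ^ 2) + 2 * x * (2 * x)) x := by
      have p2 : HasDerivAt (fun y : ℝ => 1 + y ^ 2) (2 * x) x := by
        simpa using ((hasDerivAt_pow 2 x).const_add 1)
      have pl : HasDerivAt (fun y : ℝ => 2 * y) 2 x := by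
        simpa using (hasDerivAt_id x).const_mul (2:ℝ)
      simpa using pl.fun_mul p2
    exact (hL.mul hM).sub hR
  have hmono : MonotoneOn f (Set.Icc 0 s) := by
    apply monotoneOn_of_deriv_nonneg (convex_Icc 0 s)
    · exact fun x hx => (hderiv x hx).continuousAt.continuousWithinAt
    · rw [interior_Icc]
      exact fun x hx =>
        ((hderiv x (Set.mem_Icc_of_Ioo hx)).differentiableAt).differentiableWithinAt
    · rw [interior_Icc]
      intro x hx
      rw [(hderiv x (Set.mem_Icc_of_Ioo hx)).deriv]
      have hx0 : 0 < x := hx.1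
      have hx2 : x < 1 := lt_trans hx.2 h1
      have h1x : (0:ℝ) < 1 - x := by linarith
      have h2x : (0:ℝ) < 1 + x := by linarith
      have hL0 : 0 ≤ Real.log (1 + x) - Real.log (1 - x) :=
        sub_nonneg.2 (Real.log_le_log h1x (by linarith))
      have e : 1 / (1 + x) - (-1) / (1 - x) = 2 / ((1 + x) * (1 - x)) := by
        field_simp; ring
      rw [e]
      have hx2le : x ^ 2 ≤ 1 := by nlinarith
      have hx4 : x ^ 4 ≤ x ^ 2 := by
        nlinarith [mul_nonneg (sq_nonneg x) (show (0:ℝ) ≤ 1 - x ^ 2 by linarith)]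
      have hMpos : (0:ℝ) < 1 + 6 * x ^ 2 - 3 * x ^ 4 := by nlinarith
      have h2 : (2 * (1 + x ^ 2) + 2 * x * (2 * x)) ≤
          2 / ((1 + x) * (1 - x)) * (1 + 6 * x ^ 2 - 3 * x ^ 4) := by
        rw [div_mul_eq_mul_div, le_div_iff₀ (by nlinarith)]
        nlinarith
      have h3 : 0 ≤ (Real.log (1 + x) - Real.log (1 - x)) * (6 * (2 * x) - 3 * (4 * x ^ 3)) :=
        mul_nonneg hL0 (by nlinarith)
      linarith
  have h00 : f 0 = 0 := by simp [hf]
  have := hmono (Set.left_mem_Icc.2 h0.le) (Set.right_mem_Icc.2 h0.le) h0.le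
  rw [h00] at this
  simp only [hf] at this
  linarith

lemma xi''_nonpos {t : ℝ} (h0 : 0 < t) (h1 : t < 1) : xi'' t ≤ 0 := by
  have hs0 : 0 < Real.sqrt t := Real.sqrt_pos.2 h0
  have hs1 : Real.sqrt t < 1 := by
    rw [show (1 : ℝ) = Real.sqrt 1 by simp]
    exact Real.sqrt_lt_sqrt h0.le h1
  have hst : Real.sqrt t ^ 2 = t := Real.sq_sqrt h0.le
  unfold xi''
  set s := Real.sqrt t with hs
  apply div_nonpos_of_nonpos_of_nonneg
  · have key := key_ineq hs0 hs1
    rw [← hst]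
    nlinarith [key]
  · positivity

lemma xi'_pos {t : ℝ} (h0 : 0 < t) (h1 : t < 1) : 0 < xi' t := by
  have hs0 : 0 < Real.sqrt t := Real.sqrt_pos.2 h0
  have hs1 : Real.sqrt t < 1 := by
    rw [show (1 : ℝ) = Real.sqrt 1 by simp]
    exact Real.sqrt_lt_sqrt h0.le h1
  unfold xi'
  apply mul_pos
  · apply div_pos (by linarith)
    positivity
  · exact sub_pos.2 (Real.log_lt_log (by linarith) (by linarith))

lemma continuous_psi : Continuous psi := by
  have h : psi = fun t =>
      (1 / 2) * ((1 - Real.sqrt t) ^ 2 * Real.log ((1 - Real.sqrt t) ^ 2)) +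
        (1 / 2) * ((1 + Real.sqrt t) ^ 2 * Real.log ((1 + Real.sqrt t) ^ 2)) -
        ((1 + t) * Real.log (1 + t)) := by
    funext t; unfold psi; ring
  rw [h]
  have c1 : Continuous fun t : ℝ => (1 - Real.sqrt t) ^ 2 :=
    (continuous_const.sub Real.continuous_sqrt).pow 2
  have c2 : Continuous fun t : ℝ => (1 + Real.sqrt t) ^ 2 :=
    (continuous_const.add Real.continuous_sqrt).pow 2
  have c3 : Continuous fun t : ℝ => (1 + t) := continuous_const.add continuous_id
  exact ((continuous_const.mul (Real.continuous_mul_log.comp c1)).add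
    (continuous_const.mul (Real.continuous_mul_log.comp c2))).sub
    (Real.continuous_mul_log.comp c3)

lemma continuousOn_xi : ContinuousOn xi (Set.Icc 0 1) := by
  apply continuous_psi.continuousOn.div (continuous_const.add continuous_id).continuousOn
  intro t ht
  simp only [Set.mem_Icc] at ht
  intro h
  change (1:ℝ) + t = 0 at h
  linarith [ht.1]

/-- `ξ(t) = ψ(t)/(1+t)` is strictly increasing and concave on `[0,1]`, with
`ξ(0) = 0` and `ξ(1) = log 2`. -/
theorem xi_strictMono_concave :
    StrictMonoOn xi (Set.Icc 0 1) ∧ ConcaveOn ℝ (Set.Icc 0 1) xi ∧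
      xi 0 = 0 ∧ xi 1 = Real.log 2 := by
  refine ⟨?_, ?_, ?_, ?_⟩
  · apply strictMonoOn_of_deriv_pos (convex_Icc 0 1) continuousOn_xi
    rw [interior_Icc]
    intro x hx
    rw [(hasDerivAt_xi hx.1 hx.2).deriv]
    exact xi'_pos hx.1 hx.2
  · apply concaveOn_of_hasDerivWithinAt2_nonpos (f' := xi') (f'' := xi'')
      (convex_Icc 0 1) continuousOn_xi
    · rw [interior_Icc]
      exact fun x hx => (hasDerivAt_xi hx.1 hx.2).hasDerivWithinAt
    · rw [interior_Icc]
      exact fun x hx => (hasDerivAt_xi' hx.1 hx.2).hasDerivWithinAt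
    · rw [interior_Icc]
      exact fun x hx => xi''_nonpos hx.1 hx.2
  · simp [xi, psi]
  · have h : Real.sqrt 1 = 1 := Real.sqrt_one
    simp only [xi, psi, h]
    rw [show (1:ℝ) - 1 = 0 by ring, show (1:ℝ) + 1 = 2 by ring]
    rw [Real.log_pow, Real.log_pow]
    simp [Real.log_one]
    ring
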